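/- Let Q be an ((n,K,δ))_d QECC with normalized projector ρ, and let ρ' be any density matrix on the same space with trace distance D(ρ', ρ) ≤ ε. Then |K·B'_{δ-1}(ρ',ρ') − A'_{δ-1}(ρ',ρ')| ≤ 4(K+1)·C(n, δ−1)·ε, where A'_j(τ,τ) = ∑_{|T|=j} Tr(τ_T²) and B'_j(τ,τ) = ∑_{|T|=j} Tr(τ_{T^c}²) are the Rains unitary enumerators and K·B'_{δ-1}(ρ,ρ) = A'_{δ-1}(ρ,ρ). -/

import Mathlib

open Finset ComplexOrder

noncomputable def ptrace {n : ℕ} (d : Fin n → ℕ) (S : Finset (Fin n))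
    (ρ : Matrix ((i : Fin n) → Fin (d i)) ((i : Fin n) → Fin (d i)) ℂ) :
    Matrix ((i : {j : Fin n // j ∈ S}) → Fin (d i.1))
           ((i : {j : Fin n // j ∈ S}) → Fin (d i.1)) ℂ :=
  fun x y => ∑ z : (i : {j : Fin n // j ∉ S}) → Fin (d i.1),
    ρ (fun i => if h : i ∈ S then x ⟨i, h⟩ else z ⟨i, h⟩)
      (fun i => if h : i ∈ S then y ⟨i, h⟩ else z ⟨i, h⟩)

/-- `Tr(ρ_S σ_S)`, the overlap of the reduced states on `S`. -/
noncomputable def overlap {n : ℕ} (d : Fin n → ℕ) (S : Finset (Fin n))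
    (ρ σ : Matrix ((i : Fin n) → Fin (d i)) ((i : Fin n) → Fin (d i)) ℂ) : ℂ :=
  (ptrace d S ρ * ptrace d S σ).trace

/-- A density matrix: positive semidefinite with unit trace. -/
def IsDensity {m : Type*} [Fintype m] [DecidableEq m] (ρ : Matrix m m ℂ) : Prop :=
  ρ.PosSemidef ∧ ρ.trace = 1

/-- The trace norm `‖A‖₁ = Tr √(AᴴA)` of a complex matrix. -/
noncomputable def traceNorm {m : Type*} [Fintype m] [DecidableEq m]
    (A : Matrix m m ℂ) : ℝ :=
  (((Matrix.posSemidef_conjTranspose_mul_self A).isHermitian.eigenvectorUnitary.1 *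
      Matrix.diagonal (((↑) : ℝ → ℂ) ∘ (√·) ∘ (Matrix.posSemidef_conjTranspose_mul_self A).isHermitian.eigenvalues) *
      (star (Matrix.posSemidef_conjTranspose_mul_self A).isHermitian.eigenvectorUnitary :
        Matrix m m ℂ)).trace).re

/-- The trace distance `D(ρ,σ) = ‖ρ − σ‖₁ / 2`. -/
noncomputable def traceDist {m : Type*} [Fintype m] [DecidableEq m]
    (ρ σ : Matrix m m ℂ) : ℝ :=
  traceNorm (ρ - σ) / 2

open Matrix


variable {m : Type*} [Fintype m] [DecidableEq m]


lemma psd_diag_nonneg {M : Matrix m m ℂ} (hM : M.PosSemidef) (i : m) : 0 ≤ M i i := by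
  have := hM.dotProduct_mulVec_nonneg (Pi.single i 1)
  simpa [dotProduct, Matrix.mulVec, Pi.single_apply, Finset.sum_ite_eq] using this

lemma psd_trace_nonneg {M : Matrix m m ℂ} (hM : M.PosSemidef) : 0 ≤ M.trace :=
  Finset.sum_nonneg fun i _ => psd_diag_nonneg hM i

lemma psd_trace_mul_nonneg {M N : Matrix m m ℂ} (hM : M.PosSemidef) (hN : N.PosSemidef) :
    0 ≤ (M * N).trace := by
  obtain ⟨B, rfl⟩ : ∃ B : Matrix m m ℂ, N = Bᴴ * B := by
    open scoped MatrixOrder in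
    have h0 : (0 : Matrix m m ℂ) ≤ N := Matrix.nonneg_iff_posSemidef.mpr hN
    exact ⟨CFC.sqrt N, by rw [(CFC.sqrt_nonneg N).posSemidef.1.eq, CFC.sqrt_mul_sqrt_self N h0]⟩
  rw [← mul_assoc, Matrix.trace_mul_cycle]
  exact psd_trace_nonneg (hM.mul_mul_conjTranspose_same B)

lemma conj_mul_conj (U A B : Matrix m m ℂ) (hU : star U * U = 1) :
    (U * A * star U) * (U * B * star U) = U * (A * B) * star U := by
  calc (U * A * star U) * (U * B * star U) = U * (A * ((star U * U) * B)) * star U := by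
        simp only [mul_assoc]
    _ = U * (A * B) * star U := by rw [hU, one_mul]

lemma trace_conj (U A : Matrix m m ℂ) (hU : star U * U = 1) :
    (U * A * star U).trace = A.trace := by
  rw [Matrix.trace_mul_cycle, hU, one_mul]

lemma smul_one_conj (U : Matrix m m ℂ) (hU' : U * star U = 1) (c : ℂ) :
    U * (c • (1 : Matrix m m ℂ)) * star U = c • (1 : Matrix m m ℂ) := by
  rw [Matrix.mul_smul, Matrix.smul_mul, mul_one, hU']

/-- PSD matrix is dominated by trace times identity. -/
lemma psd_le_trace_smul_one {M : Matrix m m ℂ} (hM : M.PosSemidef) :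
    PosSemidef (M.trace • (1 : Matrix m m ℂ) - M) := by
  have hH := hM.1
  set U : Matrix m m ℂ := (hH.eigenvectorUnitary : Matrix m m ℂ) with hUdef
  have hU : star U * U = 1 := Matrix.mem_unitaryGroup_iff'.mp hH.eigenvectorUnitary.2
  have hU' : U * star U = 1 := Matrix.mem_unitaryGroup_iff.mp hH.eigenvectorUnitary.2
  have hspec : M = U * diagonal (RCLike.ofReal ∘ hH.eigenvalues) * star U := hH.spectral_theorem
  have htr : M.trace = ∑ i, (hH.eigenvalues i : ℂ) := by
    conv_lhs => rw [hspec]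
    rw [trace_conj _ _ hU, Matrix.trace_diagonal]
    simp
  have key : M.trace • (1 : Matrix m m ℂ) - M =
      U * (diagonal (fun i => (∑ j, (hH.eigenvalues j : ℂ)) - (hH.eigenvalues i : ℂ))) * star U := by
    have : diagonal (fun i => (∑ j, (hH.eigenvalues j : ℂ)) - (hH.eigenvalues i : ℂ))
        = (∑ j, (hH.eigenvalues j : ℂ)) • (1 : Matrix m m ℂ)
          - diagonal (RCLike.ofReal ∘ hH.eigenvalues) := by
      ext i j
      rcases eq_or_ne i j with rfl | h
      · simp [Matrix.diagonal_apply, Matrix.one_apply, Matrix.sub_apply]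
      · simp [Matrix.diagonal_apply, Matrix.one_apply, Matrix.sub_apply, h]
    rw [this, Matrix.mul_sub, Matrix.sub_mul, smul_one_conj U hU', ← hspec, htr]
  rw [key]
  have hdiag : PosSemidef (diagonal (fun i => (∑ j, (hH.eigenvalues j : ℂ)) - (hH.eigenvalues i : ℂ))) := by
    refine Matrix.PosSemidef.diagonal fun i => ?_
    simp only [Pi.zero_apply]
    have h1 : (∑ j, (hH.eigenvalues j : ℂ)) - (hH.eigenvalues i : ℂ)
        = ((∑ j, hH.eigenvalues j - hH.eigenvalues i : ℝ) : ℂ) := by push_cast; ring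
    rw [h1, Complex.zero_le_real]
    have := Finset.single_le_sum (f := hH.eigenvalues) (fun j _ => hM.eigenvalues_nonneg j)
      (Finset.mem_univ i)
    linarith
  simpa [Matrix.star_eq_conjTranspose] using hdiag.mul_mul_conjTranspose_same U

lemma diag_mul_diag (f g : m → ℂ) :
    diagonal f * diagonal g = diagonal (fun i => f i * g i) := by
  rw [Matrix.diagonal_mul_diagonal]

/-- Jordan decomposition with trace norm. -/
lemma jordan_decomp {D : Matrix m m ℂ} (hD : D.IsHermitian) :
    ∃ P Q : Matrix m m ℂ, P.PosSemidef ∧ Q.PosSemidef ∧ D = P - Q ∧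
      traceNorm D = P.trace.re + Q.trace.re := by
  set U : Matrix m m ℂ := (hD.eigenvectorUnitary : Matrix m m ℂ) with hUdef
  have hU : star U * U = 1 := Matrix.mem_unitaryGroup_iff'.mp hD.eigenvectorUnitary.2
  have hU' : U * star U = 1 := Matrix.mem_unitaryGroup_iff.mp hD.eigenvectorUnitary.2
  have hspec : D = U * diagonal (RCLike.ofReal ∘ hD.eigenvalues) * star U := hD.spectral_theorem
  set lam := hD.eigenvalues with hlam
  refine ⟨U * diagonal (fun i => ((max (lam i) 0 : ℝ) : ℂ)) * star U,
          U * diagonal (fun i => ((max (-lam i) 0 : ℝ) : ℂ)) * star U, ?_, ?_, ?_, ?_⟩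
  · have : PosSemidef (diagonal (fun i => ((max (lam i) 0 : ℝ) : ℂ))) :=
      Matrix.PosSemidef.diagonal fun i => by
        simp only [Pi.zero_apply, Complex.zero_le_real]; exact le_max_right _ _
    simpa [Matrix.star_eq_conjTranspose] using this.mul_mul_conjTranspose_same U
  · have : PosSemidef (diagonal (fun i => ((max (-lam i) 0 : ℝ) : ℂ))) :=
      Matrix.PosSemidef.diagonal fun i => by
        simp only [Pi.zero_apply, Complex.zero_le_real]; exact le_max_right _ _
    simpa [Matrix.star_eq_conjTranspose] using this.mul_mul_conjTranspose_same U
  · rw [← Matrix.sub_mul, ← Matrix.mul_sub, Matrix.diagonal_sub]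
    rw [hspec]
    have hfun : (fun i => ((max (lam i) 0 : ℝ) : ℂ) - ((max (-lam i) 0 : ℝ) : ℂ))
        = (RCLike.ofReal ∘ lam : m → ℂ) := by
      funext i
      have h2 : max (lam i) 0 - max (-lam i) 0 = lam i := by
        rcases le_total (lam i) 0 with h | h
        · rw [max_eq_right h, max_eq_left (by linarith)]; ring
        · rw [max_eq_left h, max_eq_right (by linarith)]; ring
      rw [← Complex.ofReal_sub, h2]
      rfl
    rw [hfun]
  · -- traceNorm D = trace of P + Q
    have habs : (U * diagonal (fun i => ((|lam i| : ℝ) : ℂ)) * star U) ^ 2 = Dᴴ * D := by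
      rw [pow_two, conj_mul_conj _ _ _ hU, diag_mul_diag, hD.eq]
      conv_rhs => rw [hspec]
      rw [conj_mul_conj _ _ _ hU, diag_mul_diag]
      have hfun : (fun i => ((|lam i| : ℝ) : ℂ) * ((|lam i| : ℝ) : ℂ))
          = (fun i => ((RCLike.ofReal ∘ lam : m → ℂ) i) * ((RCLike.ofReal ∘ lam : m → ℂ) i)) := by
        funext i
        rw [← Complex.ofReal_mul, abs_mul_abs_self]
        simp [Function.comp]
      rw [hfun]
    have hPSDabs : PosSemidef (U * diagonal (fun i => ((|lam i| : ℝ) : ℂ)) * star U) := by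
      have : PosSemidef (diagonal (fun i => ((|lam i| : ℝ) : ℂ))) :=
        Matrix.PosSemidef.diagonal fun i => by
          simp only [Pi.zero_apply, Complex.zero_le_real]; exact abs_nonneg _
      simpa [Matrix.star_eq_conjTranspose] using this.mul_mul_conjTranspose_same U
    have : traceNorm D = ((U * diagonal (fun i => ((|lam i| : ℝ) : ℂ)) * star U).trace).re := by
      have hH := (Matrix.posSemidef_conjTranspose_mul_self D).isHermitian
      have hDsa : IsSelfAdjoint D := hD
      have e1 : traceNorm D = (cfc Real.sqrt (Dᴴ * D)).trace.re := by
        rw [hH.cfc_eq Real.sqrt, Matrix.IsHermitian.cfc, Unitary.conjStarAlgAut_apply]; rfl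
      have e2 : Dᴴ * D = cfc (fun x : ℝ => x * x) D := by
        rw [cfc_mul (fun x : ℝ => x) (fun x => x) D, cfc_id' ℝ D, hD.eq]
      have e3 : cfc (fun x : ℝ => |x|) D = U * diagonal (fun i => ((|lam i| : ℝ) : ℂ)) * star U := by
        rw [hD.cfc_eq, Matrix.IsHermitian.cfc, Unitary.conjStarAlgAut_apply]; rfl
      have e4 : cfc (fun x : ℝ => Real.sqrt (x * x)) D = cfc (fun x : ℝ => |x|) D :=
        cfc_congr fun x _ => Real.sqrt_mul_self_eq_abs x
      rw [e1, e2, ← cfc_comp' Real.sqrt (fun x : ℝ => x * x) D, e4, e3]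
    rw [this]
    have hsplit : (fun i => ((|lam i| : ℝ) : ℂ))
        = fun i => ((max (lam i) 0 : ℝ) : ℂ) + ((max (-lam i) 0 : ℝ) : ℂ) := by
      funext i
      rw [← Complex.ofReal_add]
      congr 1
      rcases le_total (lam i) 0 with h | h
      · rw [abs_of_nonpos h, max_eq_right h, max_eq_left (by linarith)]; ring
      · rw [abs_of_nonneg h, max_eq_left h, max_eq_right (by linarith)]; ring
    rw [hsplit]
    have : diagonal (fun i => ((max (lam i) 0 : ℝ) : ℂ) + ((max (-lam i) 0 : ℝ) : ℂ))
        = diagonal (fun i => ((max (lam i) 0 : ℝ) : ℂ)) + diagonal (fun i => ((max (-lam i) 0 : ℝ) : ℂ)) := by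
      rw [Matrix.diagonal_add]
    rw [this, Matrix.mul_add, Matrix.add_mul, Matrix.trace_add, Complex.add_re]

lemma re_nonneg_of_nonneg {z : ℂ} (h : 0 ≤ z) : 0 ≤ z.re := by
  exact (Complex.le_def.mp h).1

lemma holder_bound (c : ℝ) (hc : 0 ≤ c) {M D : Matrix m m ℂ} (hM : M.PosSemidef)
    (hMc : PosSemidef ((c : ℂ) • (1 : Matrix m m ℂ) - M)) (hD : D.IsHermitian) :
    |((M * D).trace).re| ≤ c * traceNorm D := by
  obtain ⟨P, Q, hP, hQ, hPQ, htn⟩ := jordan_decomp hD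
  have bound : ∀ R : Matrix m m ℂ, R.PosSemidef →
      0 ≤ ((M * R).trace).re ∧ ((M * R).trace).re ≤ c * (R.trace).re := by
    intro R hR
    refine ⟨re_nonneg_of_nonneg (psd_trace_mul_nonneg hM hR), ?_⟩
    have h1 : 0 ≤ ((((c : ℂ) • (1 : Matrix m m ℂ) - M) * R).trace).re :=
      re_nonneg_of_nonneg (psd_trace_mul_nonneg hMc hR)
    have h2 : (((c : ℂ) • (1 : Matrix m m ℂ) - M) * R).trace
        = (c : ℂ) * R.trace - (M * R).trace := by
      rw [Matrix.sub_mul, Matrix.trace_sub, Matrix.smul_mul, Matrix.trace_smul, one_mul,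
        smul_eq_mul]
    rw [h2, Complex.sub_re, Complex.re_ofReal_mul] at h1
    linarith
  obtain ⟨hP0, hPc⟩ := bound P hP
  obtain ⟨hQ0, hQc⟩ := bound Q hQ
  have hPt : 0 ≤ (P.trace).re := re_nonneg_of_nonneg (psd_trace_nonneg hP)
  have hQt : 0 ≤ (Q.trace).re := re_nonneg_of_nonneg (psd_trace_nonneg hQ)
  have hMD : ((M * D).trace).re = ((M * P).trace).re - ((M * Q).trace).re := by
    rw [hPQ, Matrix.mul_sub, Matrix.trace_sub, Complex.sub_re]
  rw [hMD, htn, abs_sub_le_iff]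
  constructor <;> nlinarith

namespace QeccAux

variable {n : ℕ} (d : Fin n → ℕ) (S : Finset (Fin n))

abbrev ΩF := (i : Fin n) → Fin (d i)
abbrev ΩS := (i : {j : Fin n // j ∈ S}) → Fin (d i.1)
abbrev ΩO := (i : {j : Fin n // j ∉ S}) → Fin (d i.1)

def merge (x : ΩS d S) (z : ΩO d S) : ΩF d :=
  fun i => if h : i ∈ S then x ⟨i, h⟩ else z ⟨i, h⟩

def resS (a : ΩF d) : ΩS d S := fun i => a i.1
def resO (a : ΩF d) : ΩO d S := fun i => a i.1

@[simp] lemma resS_merge (x : ΩS d S) (z : ΩO d S) : resS d S (merge d S x z) = x := by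
  funext i
  simp [resS, merge, i.2]

@[simp] lemma resO_merge (x : ΩS d S) (z : ΩO d S) : resO d S (merge d S x z) = z := by
  funext i
  simp [resO, merge, i.2]

@[simp] lemma merge_res (a : ΩF d) : merge d S (resS d S a) (resO d S a) = a := by
  funext i
  by_cases h : i ∈ S <;> simp [merge, resS, resO, h]

def splitEquiv : ΩF d ≃ ΩS d S × ΩO d S where
  toFun a := (resS d S a, resO d S a)
  invFun p := merge d S p.1 p.2
  left_inv a := merge_res d S a
  right_inv p := by cases p; simp

lemma sum_split {β : Type*} [AddCommMonoid β] (f : ΩF d → β) :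
    ∑ a, f a = ∑ x : ΩS d S, ∑ z : ΩO d S, f (merge d S x z) := by
  calc ∑ a, f a = ∑ p : ΩS d S × ΩO d S, f (merge d S p.1 p.2) := by
        refine Fintype.sum_equiv (splitEquiv d S) _ _ fun a => ?_
        simp [splitEquiv]
    _ = ∑ x : ΩS d S, ∑ z : ΩO d S, f (merge d S x z) := by exact Fintype.sum_prod_type (f := fun p : ΩS d S × ΩO d S => f (merge d S p.1 p.2))

lemma ptrace_apply (X : Matrix (ΩF d) (ΩF d) ℂ) (x y : ΩS d S) :
    ptrace d S X x y = ∑ z : ΩO d S, X (merge d S x z) (merge d S y z) := rfl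

lemma ptrace_sub (X Y : Matrix (ΩF d) (ΩF d) ℂ) :
    ptrace d S (X - Y) = ptrace d S X - ptrace d S Y := by
  ext x y
  simp [ptrace_apply, Matrix.sub_apply, Finset.sum_sub_distrib]

lemma ptrace_trace (X : Matrix (ΩF d) (ΩF d) ℂ) :
    (ptrace d S X).trace = X.trace := by
  rw [Matrix.trace, Matrix.trace]
  rw [show ∑ a, X.diag a = ∑ x : ΩS d S, ∑ z : ΩO d S, X.diag (merge d S x z) from
    sum_split d S _]
  rfl

lemma ptrace_posSemidef {X : Matrix (ΩF d) (ΩF d) ℂ} (hX : X.PosSemidef) :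
    (ptrace d S X).PosSemidef := by
  refine Matrix.PosSemidef.of_dotProduct_mulVec_nonneg ?_ ?_
  · ext x y
    rw [Matrix.conjTranspose_apply, ptrace_apply, ptrace_apply, star_sum]
    refine Finset.sum_congr rfl fun z _ => ?_
    rw [← Matrix.conjTranspose_apply, hX.1.eq]
  · intro w
    set v : ΩO d S → ΩF d → ℂ :=
      fun z a => if resO d S a = z then w (resS d S a) else 0 with hv
    have step1 : ∀ z : ΩO d S, dotProduct (star (v z)) (X *ᵥ v z)
        = ∑ x : ΩS d S, ∑ y : ΩS d S,
            star (w x) * (X (merge d S x z) (merge d S y z) * w y) := by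
      intro z
      simp only [dotProduct, Matrix.mulVec, Pi.star_apply]
      rw [sum_split d S (fun a => star (v z a) * ∑ b, X a b * v z b)]
      refine Finset.sum_congr rfl fun x _ => ?_
      rw [Finset.sum_eq_single z]
      · have h1 : v z (merge d S x z) = w x := by simp [hv]
        rw [h1, sum_split d S (fun b => X (merge d S x z) b * v z b)]
        have h2 : ∀ y : ΩS d S, (∑ z' : ΩO d S, X (merge d S x z) (merge d S y z') * v z (merge d S y z'))
            = X (merge d S x z) (merge d S y z) * w y := by
          intro y
          simp [hv, mul_ite, mul_zero, Finset.sum_ite_eq']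
        rw [Finset.sum_congr rfl fun y _ => h2 y, Finset.mul_sum]
      · intro z' _ hz'
        have : v z (merge d S x z') = 0 := by simp [hv, hz']
        rw [this, star_zero, zero_mul]
      · intro h
        exact absurd (Finset.mem_univ z) h
    have key : dotProduct (star w) (ptrace d S X *ᵥ w)
        = ∑ z : ΩO d S, dotProduct (star (v z)) (X *ᵥ v z) := by
      rw [Finset.sum_congr rfl fun z _ => step1 z]
      simp only [dotProduct, Matrix.mulVec, Pi.star_apply, ptrace_apply]
      rw [Finset.sum_comm]
      refine Finset.sum_congr rfl fun x _ => ?_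
      rw [Finset.mul_sum]
      rw [Finset.sum_comm]
      refine Finset.sum_congr rfl fun y _ => ?_
      rw [Finset.sum_mul, Finset.mul_sum]
    rw [key]
    exact Finset.sum_nonneg fun z _ => hX.dotProduct_mulVec_nonneg _

end QeccAux

namespace QeccAux

variable {n : ℕ} (d : Fin n → ℕ) (S : Finset (Fin n))

noncomputable def liftM (N : Matrix (ΩS d S) (ΩS d S) ℂ) : Matrix (ΩF d) (ΩF d) ℂ :=
  fun a b => if resO d S a = resO d S b then N (resS d S a) (resS d S b) else 0

lemma liftM_one : liftM d S (1 : Matrix (ΩS d S) (ΩS d S) ℂ) = 1 := by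
  ext a b
  simp only [liftM, Matrix.one_apply]
  rcases eq_or_ne a b with rfl | hab
  · simp
  · have hne : resO d S a ≠ resO d S b ∨ resS d S a ≠ resS d S b := by
      by_contra h
      push_neg at h
      exact hab (by rw [← merge_res d S a, h.2, h.1, merge_res])
    rw [if_neg hab]
    rcases hne with h | h
    · rw [if_neg h]
    · by_cases h2 : resO d S a = resO d S b
      · rw [if_pos h2, if_neg h]
      · rw [if_neg h2]

lemma liftM_sub (M N : Matrix (ΩS d S) (ΩS d S) ℂ) :
    liftM d S (M - N) = liftM d S M - liftM d S N := by
  ext a b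
  by_cases h : resO d S a = resO d S b <;> simp [liftM, h, Matrix.sub_apply]

lemma liftM_smul (c : ℂ) (N : Matrix (ΩS d S) (ΩS d S) ℂ) :
    liftM d S (c • N) = c • liftM d S N := by
  ext a b
  by_cases h : resO d S a = resO d S b <;> simp [liftM, h, Matrix.smul_apply]

lemma liftM_posSemidef {N : Matrix (ΩS d S) (ΩS d S) ℂ} (hN : N.PosSemidef) :
    (liftM d S N).PosSemidef := by
  refine Matrix.PosSemidef.of_dotProduct_mulVec_nonneg ?_ ?_
  · ext a b
    rw [Matrix.conjTranspose_apply]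
    simp only [liftM]
    by_cases h : resO d S a = resO d S b
    · rw [if_pos h, if_pos h.symm, ← Matrix.conjTranspose_apply, hN.1.eq]
    · rw [if_neg h, if_neg (fun hh => h hh.symm), star_zero]
  · intro v
    have key : dotProduct (star v) (liftM d S N *ᵥ v)
        = ∑ z : ΩO d S, dotProduct (star (fun x => v (merge d S x z)))
            (N *ᵥ (fun x => v (merge d S x z))) := by
      simp only [dotProduct, Matrix.mulVec, Pi.star_apply]
      rw [sum_split d S (fun a => star (v a) * ∑ b, liftM d S N a b * v b)]
      rw [Finset.sum_comm]
      refine Finset.sum_congr rfl fun z _ => ?_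
      refine Finset.sum_congr rfl fun x _ => ?_
      congr 1
      rw [sum_split d S (fun b => liftM d S N (merge d S x z) b * v b)]
      refine Finset.sum_congr rfl fun y _ => ?_
      rw [Finset.sum_eq_single z]
      · simp [liftM]
      · intro z' _ hz'
        have h0 : liftM d S N (merge d S x z) (merge d S y z') = 0 := by
          simp [liftM, hz'.symm]
        rw [h0, zero_mul]
      · intro h
        exact absurd (Finset.mem_univ z) h
    rw [key]
    exact Finset.sum_nonneg fun z _ => hN.dotProduct_mulVec_nonneg _

lemma trace_liftM_mul (N : Matrix (ΩS d S) (ΩS d S) ℂ) (X : Matrix (ΩF d) (ΩF d) ℂ) :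
    (liftM d S N * X).trace = (N * ptrace d S X).trace := by
  have lhs : (liftM d S N * X).trace = ∑ a, ∑ b, liftM d S N a b * X b a := by
    simp [Matrix.trace, Matrix.diag, Matrix.mul_apply]
  have rhs : (N * ptrace d S X).trace = ∑ x, ∑ y, N x y * ptrace d S X y x := by
    simp [Matrix.trace, Matrix.diag, Matrix.mul_apply]
  rw [lhs, rhs]
  rw [sum_split d S (fun a => ∑ b, liftM d S N a b * X b a)]
  refine Finset.sum_congr rfl fun x _ => ?_
  have hsplitb : ∀ z : ΩO d S, (∑ b, liftM d S N (merge d S x z) b * X b (merge d S x z))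
      = ∑ y : ΩS d S, N x y * X (merge d S y z) (merge d S x z) := by
    intro z
    rw [sum_split d S (fun b => liftM d S N (merge d S x z) b * X b (merge d S x z))]
    refine Finset.sum_congr rfl fun y _ => ?_
    rw [Finset.sum_eq_single z]
    · simp [liftM]
    · intro z' _ hz'
      have h0 : liftM d S N (merge d S x z) (merge d S y z') = 0 := by
        simp [liftM, hz'.symm]
      rw [h0, zero_mul]
    · intro h
      exact absurd (Finset.mem_univ z) h
  rw [Finset.sum_congr rfl fun z _ => hsplitb z]
  rw [Finset.sum_comm]
  refine Finset.sum_congr rfl fun y _ => ?_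
  rw [ptrace_apply, Finset.mul_sum]

end QeccAux


open QeccAux in
lemma overlap_diff_bound {n : ℕ} (d : Fin n → ℕ) (S : Finset (Fin n))
    {ρ ρ' : Matrix ((i : Fin n) → Fin (d i)) ((i : Fin n) → Fin (d i)) ℂ}
    (hρ : IsDensity ρ) (hρ' : IsDensity ρ') :
    |(overlap d S ρ' ρ').re - (overlap d S ρ ρ).re| ≤ 4 * traceDist ρ' ρ := by
  set A := ptrace d S ρ' with hAdef
  set B := ptrace d S ρ with hBdef
  have hA := ptrace_posSemidef d S hρ'.1
  have hB := ptrace_posSemidef d S hρ.1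
  have hAB : (A + B).PosSemidef := hA.add hB
  have htrAB : (A + B).trace = (2 : ℂ) := by
    rw [Matrix.trace_add, hAdef, hBdef, ptrace_trace, ptrace_trace, hρ'.2, hρ.2]
    norm_num
  have hM : (liftM d S (A + B)).PosSemidef := liftM_posSemidef d S hAB
  have h2 : Matrix.PosSemidef
      (((2 : ℝ) : ℂ) • (1 : Matrix (ΩF d) (ΩF d) ℂ) - liftM d S (A + B)) := by
    have h0 := psd_le_trace_smul_one hAB
    rw [htrAB] at h0
    have h3 := liftM_posSemidef d S h0
    rw [liftM_sub, liftM_smul, liftM_one] at h3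
    have h4 : ((2 : ℝ) : ℂ) = (2 : ℂ) := by norm_num
    rw [h4]
    exact h3
  have hD : (ρ' - ρ).IsHermitian := hρ'.1.1.sub hρ.1.1
  have hdiff : overlap d S ρ' ρ' - overlap d S ρ ρ
      = (liftM d S (A + B) * (ρ' - ρ)).trace := by
    rw [trace_liftM_mul, ptrace_sub, overlap, overlap, ← hAdef, ← hBdef]
    rw [Matrix.add_mul, Matrix.mul_sub, Matrix.mul_sub, Matrix.trace_add,
      Matrix.trace_sub, Matrix.trace_sub, Matrix.trace_mul_comm B A]
    ring
  have hre : (overlap d S ρ' ρ').re - (overlap d S ρ ρ).re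
      = ((liftM d S (A + B) * (ρ' - ρ)).trace).re := by
    rw [← Complex.sub_re, hdiff]
  rw [hre]
  have hb := holder_bound 2 (by norm_num) hM h2 hD
  calc |((liftM d S (A + B) * (ρ' - ρ)).trace).re| ≤ 2 * traceNorm (ρ' - ρ) := hb
    _ = 4 * traceDist ρ' ρ := by rw [traceDist]; ring

/-- Robustness of the distance criterion: let `ρ` be the normalized projector of an
`((n,K,δ))_d` QECC `Q` (so `K•ρ` is a projector and, by the Rains characterization of the
distance, `K·B'_{δ-1}(ρ,ρ) = A'_{δ-1}(ρ,ρ)`, where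
`A'_j(τ,τ) = ∑_{|T|=j} Tr(τ_T²)` and `B'_j(τ,τ) = ∑_{|T|=j} Tr(τ_{Tᶜ}²)`).
If `ρ'` is any density matrix with trace distance `D(ρ',ρ) ≤ ε`, then
`|K·B'_{δ-1}(ρ',ρ') − A'_{δ-1}(ρ',ρ')| ≤ 4(K+1)·C(n,δ−1)·ε`. -/
theorem qecc_distance_robustness {n : ℕ} (d : Fin n → ℕ) (K δcode : ℕ) (ε : ℝ)
    (ρ ρ' : Matrix ((i : Fin n) → Fin (d i)) ((i : Fin n) → Fin (d i)) ℂ)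
    (hρ : IsDensity ρ) (hρ' : IsDensity ρ')
    (hproj : ((K : ℂ) • ρ) * ((K : ℂ) • ρ) = (K : ℂ) • ρ)
    (hQECC : (K : ℂ) *
          (∑ T ∈ Finset.univ.filter (fun T : Finset (Fin n) => T.card = δcode - 1),
            overlap d Tᶜ ρ ρ) =
        ∑ T ∈ Finset.univ.filter (fun T : Finset (Fin n) => T.card = δcode - 1),
          overlap d T ρ ρ)
    (hdist : traceDist ρ' ρ ≤ ε) :
    |(K : ℝ) *
          (∑ T ∈ Finset.univ.filter (fun T : Finset (Fin n) => T.card = δcode - 1),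
            overlap d Tᶜ ρ' ρ').re -
        (∑ T ∈ Finset.univ.filter (fun T : Finset (Fin n) => T.card = δcode - 1),
          overlap d T ρ' ρ').re| ≤
      4 * (K + 1) * (n.choose (δcode - 1)) * ε := by
  
  classical
  set s := Finset.univ.filter (fun T : Finset (Fin n) => T.card = δcode - 1) with hs
  have hcard : s.card = n.choose (δcode - 1) := by
    rw [hs, ← Finset.powerset_univ, ← Finset.powersetCard_eq_filter,
      Finset.card_powersetCard, Finset.card_univ, Fintype.card_fin]
  have hterm : ∀ S : Finset (Fin n),
      |(overlap d S ρ' ρ').re - (overlap d S ρ ρ).re| ≤ 4 * ε := by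
    intro S
    have h1 := overlap_diff_bound d S hρ hρ'
    have h2 : 4 * traceDist ρ' ρ ≤ 4 * ε := by linarith
    linarith
  have hQre : (K : ℝ) * (∑ T ∈ s, overlap d Tᶜ ρ ρ).re = (∑ T ∈ s, overlap d T ρ ρ).re := by
    have := congrArg Complex.re hQECC
    rw [show ((K : ℕ) : ℂ) = (((K : ℕ) : ℝ) : ℂ) by push_cast; ring] at this
    rwa [Complex.re_ofReal_mul] at this
  have key : (K : ℝ) * (∑ T ∈ s, overlap d Tᶜ ρ' ρ').re - (∑ T ∈ s, overlap d T ρ' ρ').re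
      = (K : ℝ) * (∑ T ∈ s, ((overlap d Tᶜ ρ' ρ').re - (overlap d Tᶜ ρ ρ).re))
        - (∑ T ∈ s, ((overlap d T ρ' ρ').re - (overlap d T ρ ρ).re)) := by
    rw [Finset.sum_sub_distrib, Finset.sum_sub_distrib]
    simp only [Complex.re_sum] at hQre ⊢
    ring_nf
    ring_nf at hQre
    linarith
  simp only [Complex.re_sum] at key ⊢
  rw [key]
  have hsum1 : |∑ T ∈ s, ((overlap d Tᶜ ρ' ρ').re - (overlap d Tᶜ ρ ρ).re)|
      ≤ (n.choose (δcode - 1)) * (4 * ε) := by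
    calc |∑ T ∈ s, ((overlap d Tᶜ ρ' ρ').re - (overlap d Tᶜ ρ ρ).re)|
        ≤ ∑ T ∈ s, |(overlap d Tᶜ ρ' ρ').re - (overlap d Tᶜ ρ ρ).re| :=
          Finset.abs_sum_le_sum_abs _ _
      _ ≤ ∑ _T ∈ s, 4 * ε := Finset.sum_le_sum fun T _ => hterm Tᶜ
      _ = s.card * (4 * ε) := by rw [Finset.sum_const, nsmul_eq_mul]
      _ = (n.choose (δcode - 1)) * (4 * ε) := by rw [hcard]
  have hsum2 : |∑ T ∈ s, ((overlap d T ρ' ρ').re - (overlap d T ρ ρ).re)|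
      ≤ (n.choose (δcode - 1)) * (4 * ε) := by
    calc |∑ T ∈ s, ((overlap d T ρ' ρ').re - (overlap d T ρ ρ).re)|
        ≤ ∑ T ∈ s, |(overlap d T ρ' ρ').re - (overlap d T ρ ρ).re| :=
          Finset.abs_sum_le_sum_abs _ _
      _ ≤ ∑ _T ∈ s, 4 * ε := Finset.sum_le_sum fun T _ => hterm T
      _ = s.card * (4 * ε) := by rw [Finset.sum_const, nsmul_eq_mul]
      _ = (n.choose (δcode - 1)) * (4 * ε) := by rw [hcard]
  set X := ∑ T ∈ s, ((overlap d Tᶜ ρ' ρ').re - (overlap d Tᶜ ρ ρ).re) with hX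
  set Y := ∑ T ∈ s, ((overlap d T ρ' ρ').re - (overlap d T ρ ρ).re) with hY
  have htri : |(K : ℝ) * X - Y| ≤ |(K : ℝ) * X| + |Y| := by
    rw [sub_eq_add_neg]
    exact (abs_add_le _ _).trans (by rw [abs_neg])
  have hKX : |(K : ℝ) * X| = (K : ℝ) * |X| := by
    rw [abs_mul, abs_of_nonneg (by positivity : (0:ℝ) ≤ (K : ℝ))]
  have hK0 : (0:ℝ) ≤ (K : ℝ) := by positivity
  calc |(K : ℝ) * X - Y| ≤ |(K : ℝ) * X| + |Y| := htri
    _ = (K : ℝ) * |X| + |Y| := by rw [hKX]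
    _ ≤ (K : ℝ) * ((n.choose (δcode - 1)) * (4 * ε)) + (n.choose (δcode - 1)) * (4 * ε) := by
        have := mul_le_mul_of_nonneg_left hsum1 hK0
        linarith [hsum2]
    _ = 4 * (K + 1) * (n.choose (δcode - 1)) * ε := by push_cast; ring
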